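/- Let d ≥ 1, D ≥ d + 1, suppose d divides N_in, and consider the dataset in ℝ^D consisting of N_in/d copies of the standard basis vector e_j for each j = 1, …, d (the inliers) and N_out copies of e_{d+1} (the outliers), with L* = span(e_1, …, e_d). Then: (i) if N_out < N_in/d, every d-subspace L ≠ L* contains strictly fewer data points than L*, so L* is the unique maximizer of the number of contained data points; (ii) if N_out ≥ N_in/d, the d-subspace L = span(e_1, …, e_{d−1}, e_{d+1}) satisfies L ≠ L* and contains at least as many data points as L*, so L* is not the unique maximizer. -/

import Mathlib

open Module

section helpers
variable {D : ℕ}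

lemma li_single {ι : Type*} (f : ι → Fin D) (hf : Function.Injective f) :
    LinearIndependent ℝ (fun j => EuclideanSpace.single (f j) (1:ℝ)) := by
  have h := (EuclideanSpace.basisFun (Fin D) ℝ).toBasis.linearIndependent.comp f hf
  have : (⇑(EuclideanSpace.basisFun (Fin D) ℝ).toBasis ∘ f) = fun j => EuclideanSpace.single (f j) (1:ℝ) := by
    funext j; simp [Function.comp]
  rwa [this] at h

lemma coord_zero (T : Set (EuclideanSpace ℝ (Fin D))) (k : Fin D)
    (hT : ∀ x ∈ T, x k = 0) :
    ∀ x ∈ Submodule.span ℝ T, x k = 0 := by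
  intro x hx
  induction hx using Submodule.span_induction with
  | mem x h => exact hT x h
  | zero => rfl
  | add x y _ _ hx hy => show x k + y k = 0; rw [hx, hy, add_zero]
  | smul r x _ hx => show r * x k = 0; rw [hx, mul_zero]

lemma card_prod_subtype {α β : Type*} [Finite α] [Finite β] (Q : α → Prop) :
    Nat.card {p : α × β // Q p.1} = Nat.card {a // Q a} * Nat.card β := by
  have e : {p : α × β // Q p.1} ≃ {a // Q a} × β :=
    { toFun := fun p => (⟨p.1.1, p.2⟩, p.1.2)
      invFun := fun q => ⟨(q.1.1, q.2), q.1.2⟩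
      left_inv := fun p => rfl
      right_inv := fun q => rfl }
  rw [Nat.card_congr e, Nat.card_prod]

lemma range_sum_elim {α β γ : Type*} (f : α → γ) (g : β → γ) :
    Set.range (Sum.elim f g) = Set.range f ∪ Set.range g := by
  ext x
  constructor
  · rintro ⟨(a | b), rfl⟩
    · exact Or.inl ⟨a, rfl⟩
    · exact Or.inr ⟨b, rfl⟩
  · rintro (⟨a, rfl⟩ | ⟨b, rfl⟩)
    · exact ⟨Sum.inl a, rfl⟩
    · exact ⟨Sum.inr b, rfl⟩
end helpers

theorem stmt_6 (D d Nin Nout : ℕ) (hd : 1 ≤ d) (hD : d + 1 ≤ D) (hdvd : d ∣ Nin)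
    (Lstar : Submodule ℝ (EuclideanSpace ℝ (Fin D)))
    (hLstar : Lstar = Submodule.span ℝ (Set.range fun j : Fin d =>
      EuclideanSpace.single (Fin.castLE (by omega) j) (1 : ℝ)))
    -- the inliers: for each `j : Fin d`, `N_in / d` copies of `e_j`
    (a : Fin d × Fin (Nin / d) → EuclideanSpace ℝ (Fin D))
    (ha : ∀ p, a p = EuclideanSpace.single (Fin.castLE (by omega) p.1) (1 : ℝ))
    -- the outliers: `N_out` copies of `e_{d+1}`
    (o : Fin Nout → EuclideanSpace ℝ (Fin D))
    (ho : ∀ i, o i = EuclideanSpace.single (⟨d, by omega⟩ : Fin D) (1 : ℝ)) :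
    (Nout < Nin / d →
      ∀ L : Submodule ℝ (EuclideanSpace ℝ (Fin D)), finrank ℝ L = d → L ≠ Lstar →
        Nat.card {p // a p ∈ L} + Nat.card {i // o i ∈ L} <
          Nat.card {p // a p ∈ Lstar} + Nat.card {i // o i ∈ Lstar}) ∧
    (Nin / d ≤ Nout →
      ∀ L : Submodule ℝ (EuclideanSpace ℝ (Fin D)),
        L = Submodule.span ℝ
          ((Set.range fun j : Fin (d - 1) =>
              EuclideanSpace.single (Fin.castLE (by omega) j) (1 : ℝ)) ∪
            {EuclideanSpace.single (⟨d, by omega⟩ : Fin D) (1 : ℝ)}) →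
        L ≠ Lstar ∧ finrank ℝ L = d ∧
          Nat.card {p // a p ∈ Lstar} + Nat.card {i // o i ∈ Lstar} ≤
            Nat.card {p // a p ∈ L} + Nat.card {i // o i ∈ L}) := by
  classical
  have hdD : d ≤ D := by omega
  set kd : Fin D := ⟨d, by omega⟩ with hkd
  set ed : EuclideanSpace ℝ (Fin D) := EuclideanSpace.single kd (1 : ℝ) with hed
  set f : Fin d → EuclideanSpace ℝ (Fin D) :=
    fun j => EuclideanSpace.single (Fin.castLE hdD j) (1 : ℝ) with hf
  have hLstar' : Lstar = Submodule.span ℝ (Set.range f) := hLstar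
  have hkne : ∀ j : Fin d, kd ≠ Fin.castLE hdD j := by
    intro j
    refine Fin.ne_of_val_ne ?_
    have := j.isLt
    simp only [hkd, Fin.coe_castLE]
    omega
  -- L* basics
  have hfLstar : ∀ j, f j ∈ Lstar := by
    intro j; rw [hLstar']; exact Submodule.subset_span ⟨j, rfl⟩
  have hrankLstar : finrank ℝ Lstar = d := by
    rw [hLstar']
    rw [finrank_span_eq_card (li_single (Fin.castLE hdD) (Fin.castLE_injective hdD))]
    simp
  have hedLstar : ed ∉ Lstar := by
    intro h
    have h0 : ed kd = 0 := by
      rw [hLstar'] at h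
      refine coord_zero _ kd ?_ ed h
      rintro x ⟨j, rfl⟩
      simp [hf, EuclideanSpace.single_apply, hkne j]
    rw [hed] at h0
    simp [EuclideanSpace.single_apply] at h0
  -- counts
  have cardIn : ∀ S : Submodule ℝ (EuclideanSpace ℝ (Fin D)),
      Nat.card {p // a p ∈ S} = Nat.card {j : Fin d // f j ∈ S} * (Nin / d) := by
    intro S
    have e1 : {p // a p ∈ S} ≃ {p : Fin d × Fin (Nin / d) // f p.1 ∈ S} :=
      Equiv.subtypeEquivRight (fun p => by rw [ha p])
    rw [Nat.card_congr e1, card_prod_subtype (fun j : Fin d => f j ∈ S)]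
    simp
  have cardInStar : Nat.card {p // a p ∈ Lstar} = d * (Nin / d) := by
    rw [cardIn]
    congr 1
    rw [Nat.card_congr (Equiv.subtypeUnivEquiv hfLstar), Nat.card_eq_fintype_card, Fintype.card_fin]
  have cardOutStar : Nat.card {i // o i ∈ Lstar} = 0 := by
    have : IsEmpty {i // o i ∈ Lstar} := by
      refine ⟨fun i => ?_⟩
      exact hedLstar (by rw [← ho i.1]; exact i.2)
    exact Nat.card_of_isEmpty
  have hsplit : (d - 1) * (Nin / d) + (Nin / d) = d * (Nin / d) := by
    obtain ⟨e, rfl⟩ := Nat.exists_eq_add_of_le hd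
    rw [Nat.add_sub_cancel_left]
    ring
  constructor
  · -- part (i)
    intro hlt L hrank hne
    have hex : ∃ j : Fin d, f j ∉ L := by
      by_contra hall
      push_neg at hall
      apply hne
      refine (Submodule.eq_of_le_of_finrank_le ?_ ?_).symm
      · rw [hLstar', Submodule.span_le]; rintro x ⟨j, rfl⟩; exact hall j
      · rw [hrank, hrankLstar]
    obtain ⟨j0, hj0⟩ := hex
    have hJ : Nat.card {j : Fin d // f j ∈ L} ≤ d - 1 := by
      rw [Nat.card_eq_fintype_card]
      have := Fintype.card_subtype_lt (p := fun j : Fin d => f j ∈ L) hj0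
      simp only [Fintype.card_fin] at this
      omega
    have hOut : Nat.card {i // o i ∈ L} ≤ Nout := by
      have := Nat.card_le_card_of_injective (fun i : {i // o i ∈ L} => i.1) Subtype.val_injective
      simpa using this
    rw [cardIn L, cardInStar, cardOutStar, add_zero]
    calc Nat.card {j : Fin d // f j ∈ L} * (Nin / d) + Nat.card {i // o i ∈ L}
        ≤ (d - 1) * (Nin / d) + Nout :=
          add_le_add (Nat.mul_le_mul_right (Nin / d) hJ) hOut
      _ < (d - 1) * (Nin / d) + (Nin / d) := by omega
      _ = d * (Nin / d) := hsplit
  · -- part (ii)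
    intro hle L hL
    have hd1D : d - 1 ≤ D := by omega
    set g : Fin (d - 1) → EuclideanSpace ℝ (Fin D) :=
      fun j => EuclideanSpace.single (Fin.castLE hd1D j) (1 : ℝ) with hg
    have hL' : L = Submodule.span ℝ (Set.range g ∪ {ed}) := hL
    set ι : Fin (d - 1) ⊕ Unit → Fin D :=
      Sum.elim (fun j : Fin (d-1) => Fin.castLE hd1D j) (fun _ : Unit => kd) with hι
    set v : Fin (d - 1) ⊕ Unit → EuclideanSpace ℝ (Fin D) :=
      fun p => EuclideanSpace.single (ι p) (1 : ℝ) with hv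
    have hset : (Set.range g ∪ {ed}) = Set.range v := by
      have : v = Sum.elim g (fun _ : Unit => ed) := by
        funext p; cases p with
        | inl j => rfl
        | inr u => rfl
      rw [this, range_sum_elim, Set.range_const]
    have hinj : Function.Injective ι := by
      rintro (x | x) (y | y) h
      · simp only [hι, Sum.elim_inl] at h
        exact congrArg Sum.inl (Fin.castLE_injective _ h)
      · exfalso
        have hval : (x : ℕ) = d := congrArg Fin.val h
        have := x.isLt; omega
      · exfalso
        have hval : d = (y : ℕ) := congrArg Fin.val h
        have := y.isLt; omega
      · cases x; cases y; rfl
    have hLv : L = Submodule.span ℝ (Set.range v) := by rw [hL', hset]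
    have hedL : ed ∈ L := by
      rw [hLv]
      exact Submodule.subset_span ⟨Sum.inr (), rfl⟩
    have hneq : L ≠ Lstar := fun h => hedLstar (h ▸ hedL)
    have hrankL : finrank ℝ L = d := by
      rw [hLv, hv, finrank_span_eq_card (li_single ι hinj)]
      simp
      omega
    refine ⟨hneq, hrankL, ?_⟩
    have hginL : ∀ j : Fin d, (j : ℕ) < d - 1 → f j ∈ L := by
      intro j hj
      have : f j = v (Sum.inl ⟨j, hj⟩) := by
        rw [hf, hv]
        congr 1
      rw [this, hLv]
      exact Submodule.subset_span ⟨Sum.inl ⟨j, hj⟩, rfl⟩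
    have hJ : d - 1 ≤ Nat.card {j : Fin d // f j ∈ L} := by
      rw [Nat.card_eq_fintype_card]
      have e2 : Fin (d - 1) ≃ {j : Fin d // (j : ℕ) < d - 1} :=
        { toFun := fun k => ⟨⟨k, by omega⟩, k.2⟩
          invFun := fun j => ⟨j.1, j.2⟩
          left_inv := fun k => rfl
          right_inv := fun j => rfl }
      calc d - 1 = Fintype.card {j : Fin d // (j : ℕ) < d - 1} := by
            rw [← Fintype.card_congr e2, Fintype.card_fin]
        _ ≤ Fintype.card {j : Fin d // f j ∈ L} :=
            Fintype.card_subtype_mono _ _ (fun j hj => hginL j hj)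
    have hOut : Nat.card {i // o i ∈ L} = Nout := by
      rw [Nat.card_congr (Equiv.subtypeUnivEquiv (fun i => by rw [ho i]; exact hedL)),
        Nat.card_eq_fintype_card, Fintype.card_fin]
    rw [cardIn L, cardInStar, cardOutStar, add_zero, hOut]
    calc d * (Nin / d) = (d - 1) * (Nin / d) + (Nin / d) := hsplit.symm
      _ ≤ Nat.card {j : Fin d // f j ∈ L} * (Nin / d) + Nout :=
          add_le_add (Nat.mul_le_mul_right (Nin / d) hJ) hle
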